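/- arXiv:1610.07415 — 3 statements merged into one kernel-verified Lean document; each statement's English description precedes it below -/
import Mathlib

section
/- For every r > 0 the superconducting-band density expression d^{(s)}(r) := 1 + (μ_s − λ_s)·G_0(r) + (μ_s − 2λ − λ_s)·G_1(r) + (μ_s − 4λ − λ_s)·G_2(r) satisfies 0 ≤ d^{(s)}(r) ≤ 2. -/
open Real Filter

/-- `g_{r,x} := sqrt((x + λ_s − μ_s)² + γ_s²·r)`. -/
noncomputable def gg (gams lams mus r x : ℝ) : ℝ :=
  Real.sqrt ((x + lams - mus) ^ 2 + gams ^ 2 * r)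

/-- The function `f` from Theorem 1 of the paper. Parameters:
`beta` = β, `gams` = γ_s, `lams` = λ_s, `lamf` = λ_f, `lam` = λ,
`mus` = μ_s, `muf` = μ_f, `hs` = h_s, `hf` = h_f, `eta` = η. -/
noncomputable def ff (beta gams lams lamf lam mus muf hs hf eta r : ℝ) : ℝ :=
  (Real.exp (-(beta * muf)) + Real.exp (-(beta * (4 * lam + 2 * lamf - muf))))
      * Real.cosh (beta * hs)
    + Real.exp (-(beta * (2 * lam - hs))) * Real.cosh (beta * (eta + hf))
    + Real.exp (-(beta * (2 * lam + hs))) * Real.cosh (beta * (eta - hf))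
    + Real.exp (-(beta * (lams + muf))) * Real.cosh (beta * gg gams lams mus r 0)
    + Real.exp (-(beta * (4 * lam + lams + 2 * lamf - muf)))
      * Real.cosh (beta * gg gams lams mus r (4 * lam))
    + 2 * Real.exp (-(beta * (2 * lam + lams))) * Real.cosh (beta * hf)
      * Real.cosh (beta * gg gams lams mus r (2 * lam))

/-- The variational functional `F(r) := −γ_s·r + β⁻¹·ln f(r)`. -/
noncomputable def FF (beta gams lams lamf lam mus muf hs hf eta r : ℝ) : ℝ :=
  -(gams * r) + beta⁻¹ * Real.log (ff beta gams lams lamf lam mus muf hs hf eta r)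

/-- `G_0`. -/
noncomputable def G0 (beta gams lams lamf lam mus muf hs hf eta r : ℝ) : ℝ :=
  Real.sinh (beta * gg gams lams mus r 0) /
    (ff beta gams lams lamf lam mus muf hs hf eta r * Real.exp (beta * (lams + muf))
      * gg gams lams mus r 0)

/-- `G_1`. -/
noncomputable def G1 (beta gams lams lamf lam mus muf hs hf eta r : ℝ) : ℝ :=
  2 * Real.cosh (beta * hf) * Real.sinh (beta * gg gams lams mus r (2 * lam)) /
    (ff beta gams lams lamf lam mus muf hs hf eta r * Real.exp (beta * (2 * lam + lams))
      * gg gams lams mus r (2 * lam))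

/-- `G_2`. -/
noncomputable def G2 (beta gams lams lamf lam mus muf hs hf eta r : ℝ) : ℝ :=
  Real.sinh (beta * gg gams lams mus r (4 * lam)) /
    (ff beta gams lams lamf lam mus muf hs hf eta r
      * Real.exp (beta * (4 * lam + lams + 2 * lamf - muf))
      * gg gams lams mus r (4 * lam))


private lemma key_bound (beta f e g c m : ℝ) (hβ : 0 < beta) (hf : 0 < f) (he : 0 < e)
    (hg : 0 < g) (hm : 0 ≤ m) (hc : |c| ≤ g) :
    |c * (m * Real.sinh (beta * g) / (f * e * g))| ≤ m * Real.cosh (beta * g) * e⁻¹ / f := by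
  have hs : 0 ≤ Real.sinh (beta * g) := Real.sinh_nonneg_iff.mpr (by positivity)
  have hsc : Real.sinh (beta * g) ≤ Real.cosh (beta * g) := (Real.sinh_lt_cosh _).le
  rw [abs_mul, abs_of_nonneg (by positivity : (0:ℝ) ≤ m * Real.sinh (beta * g) / (f * e * g))]
  have h1 : |c| * (m * Real.sinh (beta * g) / (f * e * g))
      ≤ g * (m * Real.sinh (beta * g) / (f * e * g)) := by gcongr
  have h2 : g * (m * Real.sinh (beta * g) / (f * e * g))
      = m * Real.sinh (beta * g) * e⁻¹ / f := by
    field_simp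
  have h3 : m * Real.sinh (beta * g) * e⁻¹ / f ≤ m * Real.cosh (beta * g) * e⁻¹ / f := by
    gcongr
  linarith

/-- for every `r > 0` the superconducting-band density expression
lies in `[0, 2]`. -/
theorem density_s_bounds (beta gams lams lamf lam mus muf hs hf eta : ℝ) (hbeta : 0 < beta) (hgams : 0 < gams) (hlams : 0 ≤ lams) (hlamf : 0 ≤ lamf) (hlam : 0 ≤ lam) :
    ∀ r : ℝ, 0 < r →
      0 ≤ 1 + (mus - lams) * G0 beta gams lams lamf lam mus muf hs hf eta r
          + (mus - 2 * lam - lams) * G1 beta gams lams lamf lam mus muf hs hf eta r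
          + (mus - 4 * lam - lams) * G2 beta gams lams lamf lam mus muf hs hf eta r ∧
      1 + (mus - lams) * G0 beta gams lams lamf lam mus muf hs hf eta r
          + (mus - 2 * lam - lams) * G1 beta gams lams lamf lam mus muf hs hf eta r
          + (mus - 4 * lam - lams) * G2 beta gams lams lamf lam mus muf hs hf eta r ≤ 2 := by
  intro r hr
  have hgx : ∀ x : ℝ, 0 < gg gams lams mus r x := fun x =>
    Real.sqrt_pos.mpr (by positivity)
  have habs : ∀ x : ℝ, |mus - x - lams| ≤ gg gams lams mus r x := by
    intro x
    have h1 : mus - x - lams = -(x + lams - mus) := by ring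
    rw [h1, abs_neg, ← Real.sqrt_sq_eq_abs, gg]
    exact Real.sqrt_le_sqrt (by nlinarith [sq_nonneg gams, hr])
  set f := ff beta gams lams lamf lam mus muf hs hf eta r with hfdef
  have hfpos : 0 < f := by
    rw [hfdef, ff]
    have c1 := Real.cosh_pos (x := beta * hs)
    have c2 := Real.cosh_pos (x := beta * (eta + hf))
    have c3 := Real.cosh_pos (x := beta * (eta - hf))
    have c4 := Real.cosh_pos (x := beta * gg gams lams mus r 0)
    have c5 := Real.cosh_pos (x := beta * gg gams lams mus r (4 * lam))
    have c6 := Real.cosh_pos (x := beta * hf)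
    have c7 := Real.cosh_pos (x := beta * gg gams lams mus r (2 * lam))
    positivity
  have b0 : |(mus - lams) * G0 beta gams lams lamf lam mus muf hs hf eta r|
      ≤ Real.exp (-(beta * (lams + muf))) * Real.cosh (beta * gg gams lams mus r 0) / f := by
    have key := key_bound beta f (Real.exp (beta * (lams + muf))) (gg gams lams mus r 0)
      (mus - lams) 1 hbeta hfpos (Real.exp_pos _) (hgx 0) zero_le_one
      (by simpa using habs 0)
    have e1 : (mus - lams) * G0 beta gams lams lamf lam mus muf hs hf eta r
        = (mus - lams) * (1 * Real.sinh (beta * gg gams lams mus r 0) /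
          (f * Real.exp (beta * (lams + muf)) * gg gams lams mus r 0)) := by
      rw [G0]; ring
    rw [e1]
    calc _ ≤ 1 * Real.cosh (beta * gg gams lams mus r 0) *
        (Real.exp (beta * (lams + muf)))⁻¹ / f := key
      _ = _ := by rw [← Real.exp_neg]; ring
  have b1 : |(mus - 2 * lam - lams) * G1 beta gams lams lamf lam mus muf hs hf eta r|
      ≤ 2 * Real.exp (-(beta * (2 * lam + lams))) * Real.cosh (beta * hf)
        * Real.cosh (beta * gg gams lams mus r (2 * lam)) / f := by
    have key := key_bound beta f (Real.exp (beta * (2 * lam + lams)))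
      (gg gams lams mus r (2 * lam)) (mus - 2 * lam - lams) (2 * Real.cosh (beta * hf))
      hbeta hfpos (Real.exp_pos _) (hgx (2 * lam))
      (by positivity) (habs (2 * lam))
    have e1 : (mus - 2 * lam - lams) * G1 beta gams lams lamf lam mus muf hs hf eta r
        = (mus - 2 * lam - lams) * (2 * Real.cosh (beta * hf) *
          Real.sinh (beta * gg gams lams mus r (2 * lam)) /
          (f * Real.exp (beta * (2 * lam + lams)) * gg gams lams mus r (2 * lam))) := by
      rw [G1]
    rw [e1]
    calc _ ≤ 2 * Real.cosh (beta * hf) * Real.cosh (beta * gg gams lams mus r (2 * lam)) *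
        (Real.exp (beta * (2 * lam + lams)))⁻¹ / f := key
      _ = _ := by rw [← Real.exp_neg]; ring
  have b2 : |(mus - 4 * lam - lams) * G2 beta gams lams lamf lam mus muf hs hf eta r|
      ≤ Real.exp (-(beta * (4 * lam + lams + 2 * lamf - muf)))
        * Real.cosh (beta * gg gams lams mus r (4 * lam)) / f := by
    have key := key_bound beta f (Real.exp (beta * (4 * lam + lams + 2 * lamf - muf)))
      (gg gams lams mus r (4 * lam)) (mus - 4 * lam - lams) 1 hbeta hfpos
      (Real.exp_pos _) (hgx (4 * lam)) zero_le_one (habs (4 * lam))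
    have e1 : (mus - 4 * lam - lams) * G2 beta gams lams lamf lam mus muf hs hf eta r
        = (mus - 4 * lam - lams) * (1 * Real.sinh (beta * gg gams lams mus r (4 * lam)) /
          (f * Real.exp (beta * (4 * lam + lams + 2 * lamf - muf))
            * gg gams lams mus r (4 * lam))) := by
      rw [G2]; ring
    rw [e1]
    calc _ ≤ 1 * Real.cosh (beta * gg gams lams mus r (4 * lam)) *
        (Real.exp (beta * (4 * lam + lams + 2 * lamf - muf)))⁻¹ / f := key
      _ = _ := by rw [← Real.exp_neg]; ring
  have hsumf : Real.exp (-(beta * (lams + muf))) * Real.cosh (beta * gg gams lams mus r 0)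
      + 2 * Real.exp (-(beta * (2 * lam + lams))) * Real.cosh (beta * hf)
        * Real.cosh (beta * gg gams lams mus r (2 * lam))
      + Real.exp (-(beta * (4 * lam + lams + 2 * lamf - muf)))
        * Real.cosh (beta * gg gams lams mus r (4 * lam)) ≤ f := by
    rw [hfdef, ff]
    have c1 := Real.cosh_pos (x := beta * hs)
    have c2 := Real.cosh_pos (x := beta * (eta + hf))
    have c3 := Real.cosh_pos (x := beta * (eta - hf))
    have e1 := Real.exp_pos (-(beta * muf))
    have e2 := Real.exp_pos (-(beta * (4 * lam + 2 * lamf - muf)))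
    have e3 := Real.exp_pos (-(beta * (2 * lam - hs)))
    have e4 := Real.exp_pos (-(beta * (2 * lam + hs)))
    nlinarith [mul_pos (add_pos e1 e2) c1, mul_pos e3 c2, mul_pos e4 c3]
  set t0 := (mus - lams) * G0 beta gams lams lamf lam mus muf hs hf eta r
  set t1 := (mus - 2 * lam - lams) * G1 beta gams lams lamf lam mus muf hs hf eta r
  set t2 := (mus - 4 * lam - lams) * G2 beta gams lams lamf lam mus muf hs hf eta r
  have habs_sum : |t0 + t1 + t2| ≤ 1 := by
    have h1 : |t0 + t1 + t2| ≤ |t0| + |t1| + |t2| :=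
      (abs_add_le _ _).trans (by gcongr; exact abs_add_le _ _)
    have h2 : |t0| + |t1| + |t2|
        ≤ (Real.exp (-(beta * (lams + muf))) * Real.cosh (beta * gg gams lams mus r 0)
          + 2 * Real.exp (-(beta * (2 * lam + lams))) * Real.cosh (beta * hf)
            * Real.cosh (beta * gg gams lams mus r (2 * lam))
          + Real.exp (-(beta * (4 * lam + lams + 2 * lamf - muf)))
            * Real.cosh (beta * gg gams lams mus r (4 * lam))) / f := by
      have := add_le_add (add_le_add b0 b1) b2
      calc |t0| + |t1| + |t2| ≤ _ := this
        _ = _ := by ring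
    have h3 := (div_le_one hfpos).mpr hsumf
    linarith
  rw [abs_le] at habs_sum
  constructor <;> linarith [habs_sum.1, habs_sum.2]
end

section
/- For every r ≥ 0 the non-superconducting-band density expression d^{(f)}(r) := 1 + f(r)^{−1}·[ (exp(−β·(4λ + 2λ_f − μ_f)) − exp(−β·μ_f))·cosh(β·h_s) + exp(−β·(λ_s + 4λ + 2λ_f − μ_f))·cosh(β·g_{r,4λ}) − exp(−β·(λ_s + μ_f))·cosh(β·g_{r,0}) ] satisfies 0 ≤ d^{(f)}(r) ≤ 2. -/
open Real Filter

/-- for every `r ≥ 0` the non-superconducting-band density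
expression lies in `[0, 2]`. -/
theorem density_f_bounds (beta gams lams lamf lam mus muf hs hf eta : ℝ) (hbeta : 0 < beta) (hgams : 0 < gams) (hlams : 0 ≤ lams) (hlamf : 0 ≤ lamf) (hlam : 0 ≤ lam) :
    ∀ r : ℝ, 0 ≤ r →
      0 ≤ 1 + (ff beta gams lams lamf lam mus muf hs hf eta r)⁻¹ *
        ((Real.exp (-(beta * (4 * lam + 2 * lamf - muf))) - Real.exp (-(beta * muf)))
            * Real.cosh (beta * hs)
          + Real.exp (-(beta * (lams + 4 * lam + 2 * lamf - muf)))
            * Real.cosh (beta * gg gams lams mus r (4 * lam))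
          - Real.exp (-(beta * (lams + muf))) * Real.cosh (beta * gg gams lams mus r 0)) ∧
      (1 + (ff beta gams lams lamf lam mus muf hs hf eta r)⁻¹ *
        ((Real.exp (-(beta * (4 * lam + 2 * lamf - muf))) - Real.exp (-(beta * muf)))
            * Real.cosh (beta * hs)
          + Real.exp (-(beta * (lams + 4 * lam + 2 * lamf - muf)))
            * Real.cosh (beta * gg gams lams mus r (4 * lam))
          - Real.exp (-(beta * (lams + muf))) * Real.cosh (beta * gg gams lams mus r 0))) ≤ 2 := by
  intro r hr
  set N := ((Real.exp (-(beta * (4 * lam + 2 * lamf - muf))) - Real.exp (-(beta * muf)))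
            * Real.cosh (beta * hs)
          + Real.exp (-(beta * (lams + 4 * lam + 2 * lamf - muf)))
            * Real.cosh (beta * gg gams lams mus r (4 * lam))
          - Real.exp (-(beta * (lams + muf))) * Real.cosh (beta * gg gams lams mus r 0)) with hN
  set F := ff beta gams lams lamf lam mus muf hs hf eta r with hF
  have hFpos : 0 < F := by
    rw [hF]; unfold ff; positivity
  have h1 : 0 ≤ F + N := by
    rw [hF, hN]; unfold ff; ring_nf; positivity
  have h2 : 0 ≤ F - N := by
    rw [hF, hN]; unfold ff; ring_nf; positivity
  have hm1 := mul_nonneg (inv_nonneg.mpr hFpos.le) h1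
  have hm2 := mul_nonneg (inv_nonneg.mpr hFpos.le) h2
  rw [mul_add, inv_mul_cancel₀ hFpos.ne'] at hm1
  rw [mul_sub, inv_mul_cancel₀ hFpos.ne'] at hm2
  constructor <;> linarith
end

section
/- For every r ≥ 0 the inter-band magnetization expression M(r) := exp(−2βλ)·f(r)^{−1}·[ exp(−β·h_s)·sinh(β·(η − h_f)) + exp(β·h_s)·sinh(β·(η + h_f)) ] satisfies −1 ≤ M(r) ≤ 1. -/
open Real Filter

lemma abs_sinh_le_cosh (x : ℝ) : |Real.sinh x| ≤ Real.cosh x := by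
  rw [abs_le]
  constructor <;> rw [Real.sinh_eq, Real.cosh_eq] <;>
    nlinarith [Real.exp_pos x, Real.exp_pos (-x)]

lemma ff_pos (beta gams lams lamf lam mus muf hs hf eta r : ℝ) :
    0 < ff beta gams lams lamf lam mus muf hs hf eta r := by
  unfold ff
  have c1 := Real.cosh_pos (x := beta * hs)
  have c2 := Real.cosh_pos (x := beta * (eta + hf))
  have c3 := Real.cosh_pos (x := beta * (eta - hf))
  have c4 := Real.cosh_pos (x := beta * gg gams lams mus r 0)
  have c5 := Real.cosh_pos (x := beta * gg gams lams mus r (4 * lam))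
  have c6 := Real.cosh_pos (x := beta * gg gams lams mus r (2 * lam))
  have c7 := Real.cosh_pos (x := beta * hf)
  positivity

/-- for every `r ≥ 0` the inter-band magnetization expression lies
in `[−1, 1]`. -/
theorem interband_magnetization_bounds (beta gams lams lamf lam mus muf hs hf eta : ℝ) (hbeta : 0 < beta) (hgams : 0 < gams) (hlams : 0 ≤ lams) (hlamf : 0 ≤ lamf) (hlam : 0 ≤ lam) :
    ∀ r : ℝ, 0 ≤ r →
      -1 ≤ Real.exp (-(2 * beta * lam)) * (ff beta gams lams lamf lam mus muf hs hf eta r)⁻¹ *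
        (Real.exp (-(beta * hs)) * Real.sinh (beta * (eta - hf))
          + Real.exp (beta * hs) * Real.sinh (beta * (eta + hf))) ∧
      (Real.exp (-(2 * beta * lam)) * (ff beta gams lams lamf lam mus muf hs hf eta r)⁻¹ *
        (Real.exp (-(beta * hs)) * Real.sinh (beta * (eta - hf))
          + Real.exp (beta * hs) * Real.sinh (beta * (eta + hf)))) ≤ 1 := by
  intro r hr
  set F := ff beta gams lams lamf lam mus muf hs hf eta r with hF
  have hFpos : 0 < F := ff_pos beta gams lams lamf lam mus muf hs hf eta r
  set S := Real.exp (-(beta * hs)) * Real.sinh (beta * (eta - hf))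
      + Real.exp (beta * hs) * Real.sinh (beta * (eta + hf)) with hS
  have hSbound : |S| ≤ Real.exp (-(beta * hs)) * Real.cosh (beta * (eta - hf))
      + Real.exp (beta * hs) * Real.cosh (beta * (eta + hf)) := by
    calc |S| ≤ |Real.exp (-(beta * hs)) * Real.sinh (beta * (eta - hf))|
        + |Real.exp (beta * hs) * Real.sinh (beta * (eta + hf))| := abs_add_le _ _
      _ = Real.exp (-(beta * hs)) * |Real.sinh (beta * (eta - hf))|
        + Real.exp (beta * hs) * |Real.sinh (beta * (eta + hf))| := by
          rw [abs_mul, abs_mul, Real.abs_exp, Real.abs_exp]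
      _ ≤ _ := by
          gcongr
          · exact abs_sinh_le_cosh _
          · exact abs_sinh_le_cosh _
  have key : Real.exp (-(2 * beta * lam)) * |S| ≤ F := by
    have e1 : Real.exp (-(2 * beta * lam)) * Real.exp (-(beta * hs))
        = Real.exp (-(beta * (2 * lam + hs))) := by
      rw [← Real.exp_add]; ring_nf
    have e2 : Real.exp (-(2 * beta * lam)) * Real.exp (beta * hs)
        = Real.exp (-(beta * (2 * lam - hs))) := by
      rw [← Real.exp_add]; ring_nf
    have step : Real.exp (-(2 * beta * lam)) * |S|
        ≤ Real.exp (-(beta * (2 * lam + hs))) * Real.cosh (beta * (eta - hf))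
          + Real.exp (-(beta * (2 * lam - hs))) * Real.cosh (beta * (eta + hf)) := by
      calc Real.exp (-(2 * beta * lam)) * |S|
          ≤ Real.exp (-(2 * beta * lam)) *
            (Real.exp (-(beta * hs)) * Real.cosh (beta * (eta - hf))
              + Real.exp (beta * hs) * Real.cosh (beta * (eta + hf))) := by
            gcongr
        _ = Real.exp (-(beta * (2 * lam + hs))) * Real.cosh (beta * (eta - hf))
          + Real.exp (-(beta * (2 * lam - hs))) * Real.cosh (beta * (eta + hf)) := by
            rw [← e1, ← e2]; ring
    refine step.trans ?_
    rw [hF]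
    unfold ff
    have c1 := Real.cosh_pos (x := beta * hs)
    have c4 := Real.cosh_pos (x := beta * gg gams lams mus r 0)
    have c5 := Real.cosh_pos (x := beta * gg gams lams mus r (4 * lam))
    have c6 := Real.cosh_pos (x := beta * gg gams lams mus r (2 * lam))
    have c7 := Real.cosh_pos (x := beta * hf)
    have p1 := Real.exp_pos (-(beta * muf))
    have p2 := Real.exp_pos (-(beta * (4 * lam + 2 * lamf - muf)))
    have p3 := Real.exp_pos (-(beta * (lams + muf)))
    have p4 := Real.exp_pos (-(beta * (4 * lam + lams + 2 * lamf - muf)))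
    have p5 := Real.exp_pos (-(beta * (2 * lam + lams)))
    nlinarith [mul_pos (mul_pos p5 c7) c6, mul_pos p3 c4, mul_pos p4 c5,
      mul_pos (add_pos p1 p2) c1]
  have habs : |Real.exp (-(2 * beta * lam)) * F⁻¹ * S| ≤ 1 := by
    rw [abs_mul, abs_mul, Real.abs_exp, abs_inv, abs_of_pos hFpos]
    rw [mul_comm (Real.exp (-(2 * beta * lam))) F⁻¹, mul_assoc]
    rw [inv_mul_le_iff₀ hFpos, mul_one]
    exact key
  have := abs_le.mp habs
  exact ⟨this.1, this.2⟩
end
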